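/- Let n_p, n_q, n_r, n_b, n_s, n_a be natural numbers and let H₁ : Matrix n_p n_s ℝ, H₂ : Matrix n_p n_a ℝ, H₃ : Matrix n_q n_s ℝ, H₄ : Matrix n_r n_s ℝ with n_r = n_s and H₄ invertible, H₅ : Matrix n_b n_a ℝ with n_b = n_a and H₅ invertible, and E₁ : Matrix n_b n_b ℝ, E₂ : Matrix n_r n_r ℝ. Suppose vectors Δp, Δq, Δr, Δs, Δβ, Δα and residuals R_u, R_θ satisfy the block system: H₁Δs + H₂Δα = R_u; H₃Δs = R_θ; E₂Δr − H₄Δs = 0; H₁ᵀΔp + H₃ᵀΔq − H₄ᵀΔr = 0; E₁Δβ − H₅Δα = 0; H₂ᵀΔp − H₅ᵀΔβ = 0. Then the condensed system holds: (H₂H₅⁻¹E₁H₅⁻ᵀH₂ᵀ + H₁H₄⁻¹E₂H₄⁻ᵀH₁ᵀ)Δp + H₁H₄⁻¹E₂H₄⁻ᵀH₃ᵀΔq = R_u and H₃H₄⁻¹E₂H₄⁻ᵀH₁ᵀΔp + H₃H₄⁻¹E₂H₄⁻ᵀH₃ᵀΔq = R_θ. -/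
import Mathlib


open Matrix

private lemma solve_inv {n : ℕ} (A : Matrix (Fin n) (Fin n) ℝ) (hA : IsUnit A.det)
    (x y : Fin n → ℝ) (h : A *ᵥ x = y) : x = A⁻¹ *ᵥ y := by
  subst h
  rw [mulVec_mulVec, Matrix.nonsing_inv_mul _ hA, one_mulVec]

/-- 'Option two' static condensation of the six-field block system: assuming `H₄` and
`H₅` are square and invertible, any solution of the full block system satisfies the
condensed system with elemental stiffness
`K₁₁ = H₂H₅⁻¹E₁H₅⁻ᵀH₂ᵀ + H₁H₄⁻¹E₂H₄⁻ᵀH₁ᵀ`, etc. -/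
theorem option_two_static_condensation {np nq ns na : ℕ}
    (H₁ : Matrix (Fin np) (Fin ns) ℝ) (H₂ : Matrix (Fin np) (Fin na) ℝ)
    (H₃ : Matrix (Fin nq) (Fin ns) ℝ)
    (H₄ : Matrix (Fin ns) (Fin ns) ℝ) (hH₄ : IsUnit H₄)
    (H₅ : Matrix (Fin na) (Fin na) ℝ) (hH₅ : IsUnit H₅)
    (E₁ : Matrix (Fin na) (Fin na) ℝ) (E₂ : Matrix (Fin ns) (Fin ns) ℝ)
    (Δp Ru : Fin np → ℝ) (Δq Rθ : Fin nq → ℝ) (Δr Δs : Fin ns → ℝ)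
    (Δβ Δα : Fin na → ℝ)
    (h1 : H₁ *ᵥ Δs + H₂ *ᵥ Δα = Ru)
    (h2 : H₃ *ᵥ Δs = Rθ)
    (h3 : E₂ *ᵥ Δr - H₄ *ᵥ Δs = 0)
    (h4 : H₁ᵀ *ᵥ Δp + H₃ᵀ *ᵥ Δq - H₄ᵀ *ᵥ Δr = 0)
    (h5 : E₁ *ᵥ Δβ - H₅ *ᵥ Δα = 0)
    (h6 : H₂ᵀ *ᵥ Δp - H₅ᵀ *ᵥ Δβ = 0) :
    (H₂ * H₅⁻¹ * E₁ * (H₅⁻¹)ᵀ * H₂ᵀ + H₁ * H₄⁻¹ * E₂ * (H₄⁻¹)ᵀ * H₁ᵀ) *ᵥ Δp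
        + (H₁ * H₄⁻¹ * E₂ * (H₄⁻¹)ᵀ * H₃ᵀ) *ᵥ Δq = Ru ∧
      (H₃ * H₄⁻¹ * E₂ * (H₄⁻¹)ᵀ * H₁ᵀ) *ᵥ Δp
        + (H₃ * H₄⁻¹ * E₂ * (H₄⁻¹)ᵀ * H₃ᵀ) *ᵥ Δq = Rθ := by
  have d4 := (Matrix.isUnit_iff_isUnit_det H₄).mp hH₄
  have d5 := (Matrix.isUnit_iff_isUnit_det H₅).mp hH₅
  have d4t : IsUnit H₄ᵀ.det := by rwa [Matrix.det_transpose]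
  have d5t : IsUnit H₅ᵀ.det := by rwa [Matrix.det_transpose]
  have hr : Δr = (H₄⁻¹)ᵀ *ᵥ (H₁ᵀ *ᵥ Δp + H₃ᵀ *ᵥ Δq) := by
    have := solve_inv H₄ᵀ d4t Δr _ (sub_eq_zero.mp h4).symm
    rwa [← Matrix.transpose_nonsing_inv] at this
  have hs : Δs = H₄⁻¹ *ᵥ (E₂ *ᵥ Δr) :=
    solve_inv H₄ d4 Δs _ (sub_eq_zero.mp h3).symm
  have hβ : Δβ = (H₅⁻¹)ᵀ *ᵥ (H₂ᵀ *ᵥ Δp) := by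
    have := solve_inv H₅ᵀ d5t Δβ _ (sub_eq_zero.mp h6).symm
    rwa [← Matrix.transpose_nonsing_inv] at this
  have hα : Δα = H₅⁻¹ *ᵥ (E₁ *ᵥ Δβ) :=
    solve_inv H₅ d5 Δα _ (sub_eq_zero.mp h5).symm
  rw [hβ] at hα
  rw [hr] at hs
  rw [hs] at h1 h2
  rw [hα] at h1
  constructor
  · rw [← h1]
    simp only [mulVec_mulVec, mulVec_add, add_mulVec, Matrix.mul_assoc]
    abel
  · rw [← h2]
    simp only [mulVec_mulVec, mulVec_add, add_mulVec, Matrix.mul_assoc]
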